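/- Let G = [[G₁₁, G₁₂],[G₁₂ᵀ, G₂₂]] be an invertible symmetric block matrix with G₂₂ symmetric negative definite and with Γ_∅ := G₁₁ − G₁₂G₂₂⁻¹G₁₂ᵀ positive definite. Let D_α = [A_α B_α] be a q×(n_x+n_y) matrix whose B_α block has full row rank, and define Γ_α = G₁₁ − [G₁₂ A_αᵀ]·[[G₂₂, B_αᵀ],[B_α, 0]]⁻¹·[G₁₂ᵀ; A_α]. Then Γ_α is positive definite if and only if D_α G⁻¹ D_αᵀ is negative definite. -/

import Mathlib

open Matrix

section Aux

variable {m n : Type*} [Fintype m] [Fintype n] [DecidableEq m] [DecidableEq n]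

private lemma posDef_submatrix_equiv_aux {M : Matrix n n ℝ} (hM : M.PosDef) (e : m ≃ n) :
    (M.submatrix e e).PosDef := by
  rw [posDef_iff_dotProduct_mulVec] at hM ⊢
  refine ⟨(isHermitian_submatrix_equiv e).2 hM.1, fun x hx => ?_⟩
  have hx' : x ∘ e.symm ≠ 0 := by
    intro hc
    apply hx
    funext i
    simpa using congrFun hc (e i)
  have h := hM.2 hx'
  convert h using 1
  rw [submatrix_mulVec_equiv]
  simp only [dotProduct, Function.comp_apply]
  exact Fintype.sum_equiv e _ _ (fun i => by simp [Function.comp])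

private lemma posDef_submatrix_equiv {M : Matrix n n ℝ} (e : m ≃ n) :
    (M.submatrix e e).PosDef ↔ M.PosDef := by
  refine ⟨fun h => ?_, fun h => posDef_submatrix_equiv_aux h e⟩
  have := posDef_submatrix_equiv_aux h e.symm
  simpa using this

private lemma posDef_fromBlocks₁₁ {A : Matrix m m ℝ} (B : Matrix m n ℝ)
    (D : Matrix n n ℝ) (hA : A.PosDef) [Invertible A] :
    (fromBlocks A B Bᴴ D).PosDef ↔ (D - Bᴴ * A⁻¹ * B).PosDef := by
  rw [posDef_iff_dotProduct_mulVec, posDef_iff_dotProduct_mulVec, IsHermitian.fromBlocks₁₁ _ _ hA.1]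
  constructor
  · rintro ⟨h1, h2⟩
    refine ⟨h1, fun x hx => ?_⟩
    have hz : (-((A⁻¹ * B) *ᵥ x) ⊕ᵥ x) ≠ 0 := by
      intro hc
      apply hx
      funext i
      simpa using congrFun hc (Sum.inr i)
    have := h2 hz
    rw [dotProduct_mulVec, schur_complement_eq₁₁ B D _ _ hA.1, neg_add_cancel,
      dotProduct_zero, zero_add] at this
    rw [dotProduct_mulVec]
    exact this
  · rintro ⟨h1, h2⟩
    refine ⟨h1, fun z hz => ?_⟩
    rw [dotProduct_mulVec, ← Sum.elim_comp_inl_inr z,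
      schur_complement_eq₁₁ B D _ _ hA.1]
    by_cases hy : z ∘ Sum.inr = 0
    · have hx : z ∘ Sum.inl ≠ 0 := by
        intro hc
        apply hz
        funext i
        cases i with
        | inl i => exact congrFun hc i
        | inr i => exact congrFun hy i
      have h2' : star (z ∘ Sum.inr) ᵥ* (D - Bᴴ * A⁻¹ * B) ⬝ᵥ (z ∘ Sum.inr) = 0 := by
        rw [hy]
        simp
      rw [h2', add_zero, hy, mulVec_zero, add_zero, ← dotProduct_mulVec]
      exact hA.dotProduct_mulVec_pos hx
    · apply add_pos_of_nonneg_of_pos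
      · rw [← dotProduct_mulVec]
        exact (posSemidef_iff_dotProduct_mulVec.mp hA.posSemidef).2 _
      · rw [← dotProduct_mulVec]
        exact h2 hy

private lemma posDef_fromBlocks₂₂ (A : Matrix m m ℝ) (B : Matrix m n ℝ)
    {D : Matrix n n ℝ} (hD : D.PosDef) [Invertible D] :
    (fromBlocks A B Bᴴ D).PosDef ↔ (A - B * D⁻¹ * Bᴴ).PosDef := by
  rw [← posDef_submatrix_equiv (Equiv.sumComm n m), Equiv.sumComm_apply,
    fromBlocks_submatrix_sum_swap_sum_swap]
  convert posDef_fromBlocks₁₁ Bᴴ A hD <;> simp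

/-- The key symmetric Schur-complement lemma: for `P ≻ 0` and `N ≻ 0`,
`P - Rᵀ N⁻¹ R ≻ 0 ↔ N - R P⁻¹ Rᵀ ≻ 0`. -/
private lemma key_schur {P : Matrix m m ℝ} {N : Matrix n n ℝ} (R : Matrix n m ℝ)
    (hP : P.PosDef) (hN : N.PosDef) :
    (P - Rᵀ * N⁻¹ * R).PosDef ↔ (N - R * P⁻¹ * Rᵀ).PosDef := by
  haveI := hP.isUnit.invertible
  haveI := hN.isUnit.invertible
  have hRH : (Rᵀ)ᴴ = R := by
    rw [conjTranspose_eq_transpose_of_trivial, transpose_transpose]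
  have h1 := posDef_fromBlocks₁₁ (A := P) Rᵀ N hP
  have h2 := posDef_fromBlocks₂₂ (D := N) P Rᵀ hN
  rw [hRH] at h1 h2
  rw [← h2, h1]

private lemma posDef_mul_mul_transpose {M : Matrix m m ℝ} (hM : M.PosDef)
    (B : Matrix n m ℝ) (hB : LinearIndependent ℝ (fun i : n => B i)) :
    (B * M * Bᵀ).PosDef := by
  rw [posDef_iff_dotProduct_mulVec] at hM ⊢
  constructor
  · have h := hM.1
    rw [IsHermitian] at h ⊢
    rw [conjTranspose_eq_transpose_of_trivial] at h ⊢
    rw [transpose_mul, transpose_mul, transpose_transpose, h, Matrix.mul_assoc]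
  · intro x hx
    have hy : x ᵥ* B ≠ 0 := by
      intro hc
      apply hx
      have hsum : ∑ i, x i • B i = 0 := by
        funext j
        have := congrFun hc j
        simpa [vecMul, dotProduct, Finset.sum_apply] using this
      exact funext (Fintype.linearIndependent_iff.mp hB x hsum)
    have h := hM.2 hy
    have hrw : star x ⬝ᵥ (B * M * Bᵀ) *ᵥ x = star (x ᵥ* B) ⬝ᵥ M *ᵥ (x ᵥ* B) := by
      simp only [star_trivial]
      rw [← mulVec_mulVec, ← mulVec_mulVec, dotProduct_mulVec, mulVec_transpose]
    rw [hrw]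
    exact h

end Aux

/-- `Γ_α ≻ 0` if and only if `D_α G⁻¹ D_αᵀ ≺ 0`, given `G₂₂ ≺ 0` and `Γ_∅ ≻ 0`. -/
theorem stmt_8 {nx ny q : ℕ}
    (G11 : Matrix (Fin nx) (Fin nx) ℝ) (G12 : Matrix (Fin nx) (Fin ny) ℝ)
    (G22 : Matrix (Fin ny) (Fin ny) ℝ)
    (hG11 : G11.IsSymm) (hG22 : G22.IsSymm) (hG22nd : (-G22).PosDef)
    (G : Matrix (Fin nx ⊕ Fin ny) (Fin nx ⊕ Fin ny) ℝ)
    (hG : G = Matrix.fromBlocks G11 G12 G12ᵀ G22)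
    (hGinv : IsUnit G.det)
    (hΓ0 : (G11 - G12 * G22⁻¹ * G12ᵀ).PosDef)
    (Aα : Matrix (Fin q) (Fin nx) ℝ) (Bα : Matrix (Fin q) (Fin ny) ℝ)
    (hBα : LinearIndependent ℝ (fun i : Fin q => Bα i))
    (Dα : Matrix (Fin q) (Fin nx ⊕ Fin ny) ℝ)
    (hDα : Dα = Matrix.fromCols Aα Bα)
    (Γα : Matrix (Fin nx) (Fin nx) ℝ)
    (hΓα : Γα = G11 - Matrix.fromCols G12 Aαᵀ *
      (Matrix.fromBlocks G22 Bαᵀ Bα 0)⁻¹ * Matrix.fromRows G12ᵀ Aα) :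
    Γα.PosDef ↔ (-(Dα * G⁻¹ * Dαᵀ)).PosDef := by
  subst hG hDα hΓα
  -- invertibility of G22
  haveI hInvNeg : Invertible (-G22) := hG22nd.isUnit.invertible
  haveI hInv22 : Invertible G22 := (invertibleNeg (-G22)).copy G22 (neg_neg G22).symm
  have h22 : ⅟G22 = G22⁻¹ := invOf_eq_nonsing_inv G22
  -- W := G22⁻¹, symmetric
  have hWsymm : (G22⁻¹)ᵀ = G22⁻¹ := by
    rw [transpose_nonsing_inv, hG22.eq]
  -- (-G22)⁻¹ = -(G22⁻¹)
  have hnegInv : (-G22)⁻¹ = -(G22⁻¹) := by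
    apply inv_eq_right_inv
    rw [Matrix.neg_mul, Matrix.mul_neg, neg_neg, Matrix.mul_nonsing_inv _
      (isUnit_iff_isUnit_det G22 |>.mp (isUnit_of_invertible G22))]
  -- abbreviations
  set P : Matrix (Fin nx) (Fin nx) ℝ := G11 - G12 * G22⁻¹ * G12ᵀ with hPdef
  set N : Matrix (Fin q) (Fin q) ℝ := -(Bα * G22⁻¹ * Bαᵀ) with hNdef
  set R : Matrix (Fin q) (Fin nx) ℝ := Aα - Bα * G22⁻¹ * G12ᵀ with hRdef
  have hP : P.PosDef := hΓ0
  have hN : N.PosDef := by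
    have : N = Bα * (-G22)⁻¹ * Bαᵀ := by
      rw [hnegInv, hNdef, Matrix.mul_neg, Matrix.neg_mul]
    rw [this]
    exact posDef_mul_mul_transpose hG22nd.inv Bα hBα
  haveI hInvP : Invertible P := hP.isUnit.invertible
  haveI hInvN : Invertible N := hN.isUnit.invertible
  have hPsymm : Pᵀ = P := by
    rw [hPdef, transpose_sub, hG11.eq, transpose_mul, transpose_mul, hWsymm,
      transpose_transpose, Matrix.mul_assoc]
  have hPinvsymm : (P⁻¹)ᵀ = P⁻¹ := by rw [transpose_nonsing_inv, hPsymm]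
  have hNinvsymm : (N⁻¹)ᵀ = N⁻¹ := by
    rw [transpose_nonsing_inv]
    congr 1
    rw [hNdef, transpose_neg, transpose_mul, transpose_mul, hWsymm,
      transpose_transpose, Matrix.mul_assoc]
  -- Schur complements as ⅟-terms
  have eP : G11 - G12 * ⅟G22 * G12ᵀ = P := by rw [h22]
  have eN : (0 : Matrix (Fin q) (Fin q) ℝ) - Bα * ⅟G22 * Bαᵀ = N := by
    rw [h22, zero_sub]
  haveI iP' : Invertible (G11 - G12 * ⅟G22 * G12ᵀ) := by rw [eP]; exact hInvP
  haveI iN' : Invertible ((0 : Matrix (Fin q) (Fin q) ℝ) - Bα * ⅟G22 * Bαᵀ) := by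
    rw [eN]; exact hInvN
  have ePinv : ⅟(G11 - G12 * ⅟G22 * G12ᵀ) = P⁻¹ := by
    rw [invOf_eq_nonsing_inv, eP]
  have eNinv : ⅟((0 : Matrix (Fin q) (Fin q) ℝ) - Bα * ⅟G22 * Bαᵀ) = N⁻¹ := by
    rw [invOf_eq_nonsing_inv, eN]
  -- inverse of G
  haveI iG : Invertible (fromBlocks G11 G12 G12ᵀ G22) :=
    fromBlocks₂₂Invertible G11 G12 G12ᵀ G22
  have hGinvEq : (fromBlocks G11 G12 G12ᵀ G22)⁻¹ =
      fromBlocks P⁻¹ (-(P⁻¹ * G12 * G22⁻¹)) (-(G22⁻¹ * G12ᵀ * P⁻¹))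
        (G22⁻¹ + G22⁻¹ * G12ᵀ * P⁻¹ * G12 * G22⁻¹) := by
    rw [← invOf_eq_nonsing_inv, invOf_fromBlocks₂₂_eq, ePinv, h22]
  -- inverse of K
  haveI iK : Invertible (fromBlocks G22 Bαᵀ Bα (0 : Matrix (Fin q) (Fin q) ℝ)) :=
    fromBlocks₁₁Invertible G22 Bαᵀ Bα 0
  have hKinvEq : (fromBlocks G22 Bαᵀ Bα (0 : Matrix (Fin q) (Fin q) ℝ))⁻¹ =
      fromBlocks (G22⁻¹ + G22⁻¹ * Bαᵀ * N⁻¹ * Bα * G22⁻¹) (-(G22⁻¹ * Bαᵀ * N⁻¹))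
        (-(N⁻¹ * Bα * G22⁻¹)) N⁻¹ := by
    rw [← invOf_eq_nonsing_inv, invOf_fromBlocks₁₁_eq, eNinv, h22]
  -- identity for Γα
  have hΓid : G11 - Matrix.fromCols G12 Aαᵀ *
      (Matrix.fromBlocks G22 Bαᵀ Bα 0)⁻¹ * Matrix.fromRows G12ᵀ Aα
      = P - Rᵀ * N⁻¹ * R := by
    rw [hKinvEq, fromCols_mul_fromBlocks, fromCols_mul_fromRows, hPdef, hRdef,
      transpose_sub, transpose_mul, transpose_mul, hWsymm, transpose_transpose]
    simp only [Matrix.mul_add, Matrix.add_mul, Matrix.mul_sub, Matrix.sub_mul,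
      Matrix.mul_neg, Matrix.neg_mul, Matrix.mul_assoc, sub_eq_add_neg, neg_add_rev, neg_neg]
    abel
  -- identity for -Dα G⁻¹ Dαᵀ
  have hDid : -(Matrix.fromCols Aα Bα * (fromBlocks G11 G12 G12ᵀ G22)⁻¹ *
      (Matrix.fromCols Aα Bα)ᵀ) = N - R * P⁻¹ * Rᵀ := by
    rw [hGinvEq, transpose_fromCols, fromCols_mul_fromBlocks,
      fromCols_mul_fromRows, hNdef, hRdef,
      transpose_sub, transpose_mul, transpose_mul, hWsymm, transpose_transpose]
    simp only [Matrix.mul_add, Matrix.add_mul, Matrix.mul_sub, Matrix.sub_mul,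
      Matrix.mul_neg, Matrix.neg_mul, Matrix.mul_assoc, sub_eq_add_neg, neg_add_rev, neg_neg,
      neg_add]
    abel
  rw [hΓid, hDid]
  exact key_schur R hP hN
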